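/- There exists a constant C > 0 such that for every pair of positive integers n, k with k ≤ n, there is a T-periodic C² function h : ℝ → ℝ, with T = π/(n+k), satisfying |h(φ)| ≤ 5kT, |h'(φ)| ≤ 5k, |h''(φ)| ≤ C k n for all φ, and h(φ) = -4k(φ - φ_m) whenever |φ - φ_m| ≤ T/5, where φ_m = mT for m ∈ ℤ. -/

import Mathlib

open Real intervalIntegral

noncomputable def mesA : ℝ := Real.cos (2*π/5)
noncomputable def mesB : ℝ := Real.cos (2*π/5) - Real.cos (5*π/9)
noncomputable def mesS (c : ℝ) : ℝ := Real.smoothTransition ((mesA - c)/mesB)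
noncomputable def mesI : ℝ := ∫ θ in (0:ℝ)..(2*π), mesS (Real.cos θ)
noncomputable def mesL : ℝ := (8*π/9)/mesI
noncomputable def mesW (θ : ℝ) : ℝ := 9 * mesL * mesS (Real.cos θ) - 4

lemma mesA_pos : 0 < mesA := by
  have := Real.pi_pos
  apply Real.cos_pos_of_mem_Ioo
  constructor <;> [linarith; linarith]

lemma mesB_pos : 0 < mesB := by
  have := Real.pi_pos
  have h1 : Real.cos (5*π/9) ≤ 0 :=
    Real.cos_nonpos_of_pi_div_two_le_of_le (by linarith) (by linarith)
  have := mesA_pos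
  unfold mesB mesA at *
  linarith

lemma mesS_nonneg (c : ℝ) : 0 ≤ mesS c := Real.smoothTransition.nonneg _
lemma mesS_le_one (c : ℝ) : mesS c ≤ 1 := Real.smoothTransition.le_one _

lemma mesS_zero {c : ℝ} (h : mesA ≤ c) : mesS c = 0 := by
  apply Real.smoothTransition.zero_of_nonpos
  apply div_nonpos_of_nonpos_of_nonneg <;> [linarith; exact mesB_pos.le]

lemma mesS_one {c : ℝ} (h : c ≤ Real.cos (5*π/9)) : mesS c = 1 := by
  apply Real.smoothTransition.one_of_one_le
  rw [le_div_iff₀ mesB_pos]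
  unfold mesA mesB at *
  linarith

lemma mesS_contDiff : ContDiff ℝ 2 mesS := by
  have h1 : ContDiff ℝ 2 (Real.smoothTransition) := Real.smoothTransition.contDiff
  exact h1.comp ((contDiff_const.sub contDiff_id).div_const _)



lemma mesS_continuous : Continuous (fun θ => mesS (Real.cos θ)) :=
  mesS_contDiff.continuous.comp Real.continuous_cos

lemma cos_le_on_mid {θ : ℝ} (h1 : 5*π/9 ≤ θ) (h2 : θ ≤ 13*π/9) :
    Real.cos θ ≤ Real.cos (5*π/9) := by
  have hpi := Real.pi_pos
  rcases le_total θ π with hθ | hθ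
  · exact Real.cos_le_cos_of_nonneg_of_le_pi (by linarith) (by linarith) h1
  · have : Real.cos θ = Real.cos (2*π - θ) := by
      rw [Real.cos_sub]; simp [Real.cos_two_pi, Real.sin_two_pi]
    rw [this]
    exact Real.cos_le_cos_of_nonneg_of_le_pi (by linarith) (by linarith) (by linarith)

lemma mesI_ge : 8*π/9 ≤ mesI := by
  have hpi := Real.pi_pos
  have hint : ∀ a b : ℝ, IntervalIntegrable (fun θ => mesS (Real.cos θ)) MeasureTheory.volume a b :=
    fun a b => mesS_continuous.intervalIntegrable a b
  have hsplit : mesI = (∫ θ in (0:ℝ)..(5*π/9), mesS (Real.cos θ))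
      + ((∫ θ in (5*π/9:ℝ)..(13*π/9), mesS (Real.cos θ))
      + (∫ θ in (13*π/9:ℝ)..(2*π), mesS (Real.cos θ))) := by
    rw [integral_add_adjacent_intervals (hint _ _) (hint _ _),
      integral_add_adjacent_intervals (hint _ _) (hint _ _)]
    rfl
  have h1 : (0:ℝ) ≤ ∫ θ in (0:ℝ)..(5*π/9), mesS (Real.cos θ) :=
    integral_nonneg (by linarith) (fun x _ => mesS_nonneg _)
  have h3 : (0:ℝ) ≤ ∫ θ in (13*π/9:ℝ)..(2*π), mesS (Real.cos θ) :=
    integral_nonneg (by linarith) (fun x _ => mesS_nonneg _)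
  have h2 : (∫ θ in (5*π/9:ℝ)..(13*π/9), mesS (Real.cos θ)) = 8*π/9 := by
    have : ∀ θ ∈ Set.uIcc (5*π/9:ℝ) (13*π/9), mesS (Real.cos θ) = (fun _ => (1:ℝ)) θ := by
      intro θ hθ
      rw [Set.uIcc_of_le (by linarith)] at hθ
      exact mesS_one (cos_le_on_mid hθ.1 hθ.2)
    rw [integral_congr this, integral_const, smul_eq_mul]
    ring
  rw [hsplit, h2]; linarith

noncomputable def mesM : ℝ := sSup ((fun x => |deriv mesW x|) '' Set.Icc 0 (2*π))


lemma mesI_pos : 0 < mesI := lt_of_lt_of_le (by positivity) mesI_ge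
lemma mesL_pos : 0 < mesL := div_pos (by have := Real.pi_pos; positivity) mesI_pos
lemma mesL_le_one : mesL ≤ 1 := by
  rw [mesL, div_le_one mesI_pos]; exact mesI_ge

lemma mesW_contDiff : ContDiff ℝ 2 mesW :=
  ((contDiff_const.mul (mesS_contDiff.comp Real.contDiff_cos)).sub contDiff_const)

lemma mesW_periodic : Function.Periodic mesW (2*π) := fun x => by
  simp [mesW, Real.cos_add_two_pi]

lemma mesW_lb (θ : ℝ) : -4 ≤ mesW θ := by
  have h1 : 0 ≤ 9 * mesL * mesS (Real.cos θ) := by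
    have := mesL_pos; have := mesS_nonneg (Real.cos θ); positivity
  simp only [mesW]; linarith

lemma mesW_ub (θ : ℝ) : mesW θ ≤ 5 := by
  have h1 : 9 * mesL * mesS (Real.cos θ) ≤ 9 := by
    have h2 := mesL_pos; have := mesS_nonneg (Real.cos θ)
    calc 9 * mesL * mesS (Real.cos θ) ≤ 9 * mesL * 1 := by
          apply mul_le_mul_of_nonneg_left (mesS_le_one _) (by positivity)
      _ ≤ 9 * 1 * 1 := by have := mesL_le_one; nlinarith
      _ = 9 := by ring
  simp only [mesW]; linarith

lemma mesW_abs (θ : ℝ) : |mesW θ| ≤ 5 := by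
  rw [abs_le]; exact ⟨by linarith [mesW_lb θ], mesW_ub θ⟩

lemma mesW_eq {θ : ℝ} (h : mesA ≤ Real.cos θ) : mesW θ = -4 := by
  simp [mesW, mesS_zero h]

lemma mesW_integral : (∫ θ in (0:ℝ)..(2*π), mesW θ) = 0 := by
  have h1 : (∫ θ in (0:ℝ)..(2*π), mesW θ)
      = (∫ θ in (0:ℝ)..(2*π), 9 * mesL * mesS (Real.cos θ)) - ∫ θ in (0:ℝ)..(2*π), (4:ℝ) := by
    apply integral_sub
    · exact ((continuous_const.mul mesS_continuous).intervalIntegrable _ _)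
    · exact intervalIntegrable_const
  rw [h1, integral_const_mul, integral_const, smul_eq_mul]
  have h2 : mesL * mesI = 8*π/9 := div_mul_cancel₀ _ (ne_of_gt mesI_pos)
  show 9 * mesL * mesI - _ = 0
  nlinarith [h2]

lemma mesW_deriv_cont : Continuous (deriv mesW) := by
  have h0 : ((1:WithTop ℕ∞)+1) = 2 := by norm_num
  have := (contDiff_succ_iff_deriv (n := 1)).1 (h0 ▸ mesW_contDiff)
  exact this.2.2.continuous

lemma mesW_deriv_periodic : Function.Periodic (deriv mesW) (2*π) := by
  intro x
  have : mesW = fun y => mesW (y + 2*π) := by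
    funext y; rw [mesW_periodic y]
  conv_lhs => rw [show deriv mesW (x + 2*π) = deriv (fun y => mesW (y + 2*π)) x by
    rw [deriv_comp_add_const]]
  rw [← this]

lemma mesM_bound (θ : ℝ) : |deriv mesW θ| ≤ mesM := by
  have hpi := Real.pi_pos
  set m : ℤ := ⌊θ / (2*π)⌋ with hm
  have hfr : θ - m * (2*π) ∈ Set.Icc (0:ℝ) (2*π) := by
    constructor
    · exact Int.sub_floor_div_mul_nonneg θ (by positivity)
    · exact (Int.sub_floor_div_mul_lt θ (by positivity)).le
  have heq : deriv mesW θ = deriv mesW (θ - m * (2*π)) :=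
    (mesW_deriv_periodic.sub_int_mul_eq m).symm
  rw [heq]
  apply le_csSup
  · exact (isCompact_Icc.bddAbove_image (mesW_deriv_cont.abs.continuousOn))
  · exact ⟨_, hfr, rfl⟩

lemma mesM_nonneg : 0 ≤ mesM := le_trans (abs_nonneg _) (mesM_bound 0)

lemma cos_ge_of_small {x : ℝ} (h : |x| ≤ 2*π/5) : mesA ≤ Real.cos x := by
  have hpi := Real.pi_pos
  rw [← Real.cos_abs]
  exact Real.cos_le_cos_of_nonneg_of_le_pi (abs_nonneg x) (by linarith) h


theorem stmt_19 :
    ∃ C : ℝ, 0 < C ∧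
      ∀ n k : ℕ, 1 ≤ k → k ≤ n →
        ∃ h : ℝ → ℝ,
          Function.Periodic h (π / ((n : ℝ) + k)) ∧
          ContDiff ℝ 2 h ∧
          (∀ φ : ℝ, |h φ| ≤ 5 * k * (π / ((n : ℝ) + k)) ∧
            |deriv h φ| ≤ 5 * k ∧
            |deriv (deriv h) φ| ≤ C * k * n) ∧
          (∀ m : ℤ, ∀ φ : ℝ, |φ - m * (π / ((n : ℝ) + k))| ≤ (π / ((n : ℝ) + k)) / 5 →
            h φ = -4 * k * (φ - m * (π / ((n : ℝ) + k)))) := by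
  refine ⟨36*mesM + 1, by have := mesM_nonneg; linarith, ?_⟩
  intro n k hk hkn
  have hpi := Real.pi_pos
  have hk1 : (1:ℝ) ≤ (k:ℝ) := by exact_mod_cast hk
  have hkn' : (k:ℝ) ≤ (n:ℝ) := by exact_mod_cast hkn
  have hn1 : (1:ℝ) ≤ (n:ℝ) := le_trans hk1 hkn'
  set N : ℝ := (n:ℝ) + (k:ℝ) with hN
  have hNpos : 0 < N := by rw [hN]; linarith
  set T : ℝ := π / N with hT
  have hTpos : 0 < T := div_pos hpi hNpos
  set c : ℝ := 2*N with hc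
  have hcpos : 0 < c := by rw [hc]; linarith
  have hcT : c * T = 2*π := by rw [hc, hT]; field_simp
  set g : ℝ → ℝ := fun t => (k:ℝ) * mesW (c*t) with hg
  have hgcont : Continuous g :=
    continuous_const.mul (mesW_contDiff.continuous.comp (continuous_const.mul continuous_id))
  set h : ℝ → ℝ := fun φ => ∫ t in (0:ℝ)..φ, g t with hh
  have hgbound : ∀ t, |g t| ≤ 5*(k:ℝ) := by
    intro t
    rw [hg]; simp only
    rw [abs_mul, abs_of_nonneg (by positivity : (0:ℝ) ≤ (k:ℝ))]
    nlinarith [mesW_abs (c*t)]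
  have hgper : Function.Periodic g T := by
    intro t
    simp only [hg]
    congr 1
    have he : c*(t+T) = c*t + 2*π := by rw [mul_add, hcT]
    rw [he, mesW_periodic]
  have hgint : ∀ a b : ℝ, IntervalIntegrable g MeasureTheory.volume a b :=
    fun a b => hgcont.intervalIntegrable a b
  have hint0 : (∫ t in (0:ℝ)..T, g t) = 0 := by
    rw [hg]
    rw [intervalIntegral.integral_const_mul]
    rw [intervalIntegral.integral_comp_mul_left (fun x => mesW x) (ne_of_gt hcpos)]
    rw [mul_zero, hcT, mesW_integral]
    simp
  have hderiv : ∀ b, deriv h b = g b := fun b => hgcont.deriv_integral g 0 b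
  have hdiff : Differentiable ℝ h :=
    fun b => ((hgcont.integral_hasStrictDerivAt 0 b).hasDerivAt).differentiableAt
  have hD : deriv h = g := funext hderiv
  have hper : Function.Periodic h T := by
    intro φ
    have he : h (φ + T) = h φ + ∫ t in φ..(φ+T), g t :=
      (intervalIntegral.integral_add_adjacent_intervals (hgint 0 φ) (hgint φ (φ+T))).symm
    rw [he, hgper.intervalIntegral_add_eq φ 0]
    simpa using hint0
  have hmT : ∀ m : ℤ, h ((m:ℝ)*T) = 0 := by
    intro m
    rw [hper.int_mul_eq m]
    simp [hh]
  have hsub : ∀ a b : ℝ, h b - h a = ∫ t in a..b, g t := by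
    intro a b
    simp only [hh]
    rw [← intervalIntegral.integral_add_adjacent_intervals (hgint 0 a) (hgint a b)]
    ring
  have hval : ∀ (m : ℤ) (φ : ℝ), h φ = ∫ t in ((m:ℝ)*T)..φ, g t := by
    intro m φ
    rw [← hsub ((m:ℝ)*T) φ, hmT m, sub_zero]
  refine ⟨h, hper, ?_, ?_, ?_⟩
  · -- ContDiff
    have h0 : ((1:WithTop ℕ∞)+1) = 2 := by norm_num
    rw [← h0, contDiff_succ_iff_deriv]
    refine ⟨hdiff, by simp, ?_⟩
    rw [hD]
    exact (contDiff_const.mul (mesW_contDiff.comp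
      (contDiff_const.mul contDiff_id))).of_le (by norm_num)
  · intro φ
    refine ⟨?_, ?_, ?_⟩
    · -- |h φ| ≤ 5 k T
      set m : ℤ := round (φ/T) with hm
      have h1 : |φ - m*T| ≤ T/2 := by
        have hr := abs_sub_round (φ/T)
        have he : φ - m*T = (φ/T - m)*T := by field_simp
        rw [he, abs_mul, abs_of_pos hTpos]
        nlinarith
      have h3 : |h φ| ≤ 5*(k:ℝ) * |φ - m*T| := by
        rw [hval m φ]
        have := intervalIntegral.norm_integral_le_of_norm_le_const
          (C := 5*(k:ℝ)) (f := g) (a := (m:ℝ)*T) (b := φ) (fun x _ => hgbound x)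
        rw [Real.norm_eq_abs] at this
        calc |∫ t in ((m:ℝ)*T)..φ, g t| ≤ 5*(k:ℝ) * |φ - (m:ℝ)*T| := this
          _ = 5*(k:ℝ) * |φ - m*T| := by norm_num
      calc |h φ| ≤ 5*(k:ℝ) * (T/2) := by nlinarith [abs_nonneg (φ - (m:ℝ)*T)]
        _ ≤ 5 * (k:ℝ) * T := by nlinarith
    · rw [hderiv φ]; exact hgbound φ
    · rw [hD]
      have hw : HasDerivAt mesW (deriv mesW (c*φ)) (c*φ) :=
        ((mesW_contDiff.differentiable (by norm_num)) (c*φ)).hasDerivAt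
      have hlin : HasDerivAt (fun t : ℝ => c*t) c φ := by
        simpa using (hasDerivAt_id φ).const_mul c
      have h4 : HasDerivAt g ((k:ℝ) * (deriv mesW (c*φ) * c)) φ :=
        (hw.comp φ hlin).const_mul (k:ℝ)
      rw [h4.deriv]
      have h5 := mesM_bound (c*φ)
      have h6 : |(k:ℝ) * (deriv mesW (c*φ) * c)| = (k:ℝ) * |deriv mesW (c*φ)| * c := by
        rw [abs_mul, abs_mul, abs_of_nonneg (by positivity : (0:ℝ) ≤ (k:ℝ)),
          abs_of_pos hcpos]
        ring
      rw [h6]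
      have hc4 : c ≤ 4*(n:ℝ) := by rw [hc, hN]; linarith
      have hk0 : (0:ℝ) ≤ (k:ℝ) := by positivity
      have hn0 : (0:ℝ) ≤ (n:ℝ) := by positivity
      have hd0 := abs_nonneg (deriv mesW (c*φ))
      calc (k:ℝ) * |deriv mesW (c*φ)| * c ≤ (k:ℝ) * mesM * c :=
            mul_le_mul_of_nonneg_right (mul_le_mul_of_nonneg_left h5 hk0) hcpos.le
        _ ≤ (k:ℝ) * mesM * (4*(n:ℝ)) :=
            mul_le_mul_of_nonneg_left hc4 (mul_nonneg hk0 mesM_nonneg)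
        _ ≤ (36*mesM+1) * (k:ℝ) * (n:ℝ) := by
            nlinarith [mul_nonneg mesM_nonneg (mul_nonneg hk0 hn0),
              mul_le_mul_of_nonneg_left (mul_le_mul hk1 hn1 (by norm_num) hk0) mesM_nonneg,
              mul_nonneg hk0 hn0]
  · -- linear part
    intro m φ hφ
    rw [hval m φ]
    have hcongr : ∀ t ∈ Set.uIcc ((m:ℝ)*T) φ, g t = (fun _ => -4*(k:ℝ)) t := by
      intro t ht
      have h5 : |t - m*T| ≤ T/5 := by
        rw [abs_le] at hφ ⊢
        rcases le_total ((m:ℝ)*T) φ with hle | hle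
        · rw [Set.uIcc_of_le hle] at ht
          exact ⟨by linarith [ht.1, hφ.1], by linarith [ht.2, hφ.2]⟩
        · rw [Set.uIcc_of_ge hle] at ht
          exact ⟨by linarith [ht.1, hφ.1], by linarith [ht.2, hφ.2]⟩
      have h6 : |c*t - (m:ℝ)*(2*π)| ≤ 2*π/5 := by
        have he : c*t - (m:ℝ)*(2*π) = c*(t - m*T) := by
          rw [mul_sub, ← hcT]; ring
        rw [he, abs_mul, abs_of_pos hcpos]
        calc c * |t - m*T| ≤ c * (T/5) := by nlinarith
          _ = 2*π/5 := by rw [← hcT]; ring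
      have h7 : mesA ≤ Real.cos (c*t) := by
        rw [show c*t = (c*t - (m:ℝ)*(2*π)) + (m:ℝ)*(2*π) by ring,
          Real.cos_add_int_mul_two_pi]
        exact cos_ge_of_small h6
      simp only [hg]
      rw [mesW_eq h7]
      ring
    rw [intervalIntegral.integral_congr hcongr, intervalIntegral.integral_const, smul_eq_mul]
    ring
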